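/- With surface symbol O = c(a₁a₂ā₁ā₂a₃a₄ā₃ā₄), the bracket of the cyclic words c(a₁a₂a₂a₃) and c(ā₂ā₂) equals -2·c(a₃a₁); moreover LP₂(c(a₁a₂a₂a₃), c(ā₂ā₂)) consists of exactly two linked pairs, both of type (3), namely two occurrences of (a₁a₂a₂a₃, ā₂ā₂ā₂ā₂). -/

import Mathlib

/-!
Combinatorial model of the Goldman–Turaev Lie bialgebra of curves on a surface
with boundary, following M. Chas, "Combinatorial Lie bialgebras of curves on
surfaces".

The alphabet `𝔸ₙ = {a₁,…,aₙ, ā₁,…,āₙ}` is modelled by `Letter n := Fin n × Bool`,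
with the bar involution flipping the boolean.  Linear words are lists of letters;
a cyclic word is a list up to rotation (`List.IsRotated`).
-/

open List

abbrev Letter (n : ℕ) := Fin n × Bool

namespace ChasCW

variable {n : ℕ}

/-- The bar involution `x ↦ x̄` on letters. -/
def bar (x : Letter n) : Letter n := (x.1, !x.2)

/-- The formal inverse `W̄` of a linear word `W`. -/
def wordInv (w : List (Letter n)) : List (Letter n) := (w.map bar).reverse

/-- A linear word is freely reduced if no letter is followed by its inverse. -/
def Reduced (w : List (Letter n)) : Prop := w.Chain' (fun a b => b ≠ bar a)

/-- A nonempty word all of whose cyclic rotations are freely reduced: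
a representative of a reduced cyclic word. -/
def CyclicallyReduced (w : List (Letter n)) : Prop :=
  w ≠ [] ∧ ∀ i, Reduced (w.rotate i)

/-- The type of cyclic words: lists of letters up to rotation. -/
abbrev CWord (n : ℕ) := Quotient (List.IsRotated.setoid (Letter n))

/-- The cyclic word `c(w)` determined by a linear word `w`. -/
def cw (w : List (Letter n)) : CWord n := Quotient.mk _ w

/-- A surface symbol: a reduced cyclic word containing every letter of the
alphabet exactly once. -/
def SurfaceSymbol (O : List (Letter n)) : Prop :=
  CyclicallyReduced O ∧ ∀ x : Letter n, O.count x = 1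

/-- `w` embeds injectively and orientation-preservingly as a cyclic subsequence
of the cyclic word `O`. -/
def CyclicEmbeds (w O : List (Letter n)) : Prop :=
  w.Nodup ∧ ∃ i ≤ w.length, ∃ j ≤ O.length, (w.rotate i).Sublist (O.rotate j)

open Classical in
/-- The orientation `o(w) ∈ {-1,0,1}` of a cyclic word relative to the surface
symbol `O`: `1` for an orientation-preserving embedding of rings, `-1` for an
orientation-reversing one, `0` otherwise. -/
noncomputable def orient (O w : List (Letter n)) : ℤ :=
  if CyclicEmbeds w O then 1 else if CyclicEmbeds w O.reverse then -1 else 0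

/-- Case (1) of Definition 2.1: `P = p₁p₂`, `Q = q₁q₂` and
`o(c(p̄₁q̄₁p₂q₂)) ≠ 0`. -/
def Linked1 (O : List (Letter n)) (p₁ p₂ q₁ q₂ : Letter n) : Prop :=
  Reduced [p₁, p₂] ∧ Reduced [q₁, q₂] ∧ orient O [bar p₁, bar q₁, p₂, q₂] ≠ 0

/-- Case (2) of Definition 2.1: `P = p₁Yp₂`, `Q = q₁Yq₂`, `p₁ ≠ q₁`, `p₂ ≠ q₂`,
`Y = x₁X x₂` nonempty, and `o(c(p̄₁q̄₁x₁)) = o(c(p₂q₂x̄₂))`. -/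
def Linked2 (O : List (Letter n)) (p₁ p₂ q₁ q₂ x₁ x₂ : Letter n)
    (Y : List (Letter n)) : Prop :=
  Y ≠ [] ∧ Y.head? = some x₁ ∧ Y.getLast? = some x₂ ∧
  p₁ ≠ q₁ ∧ p₂ ≠ q₂ ∧
  Reduced (p₁ :: (Y ++ [p₂])) ∧ Reduced (q₁ :: (Y ++ [q₂])) ∧
  orient O [bar p₁, bar q₁, x₁] = orient O [p₂, q₂, bar x₂]

/-- Case (3) of Definition 2.1: `P = p₁Yp₂`, `Q = q₁Ȳq₂`, `p₁ ≠ q̄₂`, `p₂ ≠ q̄₁`,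
`Y = x₁X x₂` nonempty, and `o(c(q₂p̄₁x₁)) = o(c(q̄₁p₂x̄₂))`. -/
def Linked3 (O : List (Letter n)) (p₁ p₂ q₁ q₂ x₁ x₂ : Letter n)
    (Y : List (Letter n)) : Prop :=
  Y ≠ [] ∧ Y.head? = some x₁ ∧ Y.getLast? = some x₂ ∧
  p₁ ≠ bar q₂ ∧ p₂ ≠ bar q₁ ∧
  Reduced (p₁ :: (Y ++ [p₂])) ∧ Reduced (q₁ :: (wordInv Y ++ [q₂])) ∧
  orient O [q₂, bar p₁, x₁] = orient O [bar q₁, p₂, bar x₂]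

/-- `(P,Q)` is an `O`-linked pair (Definition 2.1). -/
def LinkedPair (O P Q : List (Letter n)) : Prop :=
  (∃ p₁ p₂ q₁ q₂, P = [p₁, p₂] ∧ Q = [q₁, q₂] ∧ Linked1 O p₁ p₂ q₁ q₂) ∨
  (∃ p₁ p₂ q₁ q₂ x₁ x₂ Y, P = p₁ :: (Y ++ [p₂]) ∧ Q = q₁ :: (Y ++ [q₂]) ∧
    Linked2 O p₁ p₂ q₁ q₂ x₁ x₂ Y) ∨
  (∃ p₁ p₂ q₁ q₂ x₁ x₂ Y, P = p₁ :: (Y ++ [p₂]) ∧ Q = q₁ :: (wordInv Y ++ [q₂]) ∧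
    Linked3 O p₁ p₂ q₁ q₂ x₁ x₂ Y)

/-- The sign of a linked pair `(P,Q)`, computed from the (unique) decomposition
of `P` and `Q` prescribed by Definition 2.1. -/
noncomputable def signLP (O P Q : List (Letter n)) : ℤ :=
  match P, Q with
  | p₁ :: P', q₁ :: Q' =>
    match P'.getLast?, Q'.getLast? with
    | some p₂, some q₂ =>
      let Y := P'.dropLast
      let Z := Q'.dropLast
      if Y = [] then orient O [bar p₁, bar q₁, p₂, q₂]
      else
        match Y.head?, Y.getLast? with
        | some x₁, some _ =>
          if Z = wordInv Y then orient O [q₂, bar p₁, x₁]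
          else orient O [bar p₁, bar q₁, x₁]
        | _, _ => 0
    | _, _ => 0
  | _, _ => 0

/-- The subword of length `l` of (a large power of) the cyclic word `V`,
starting at position `i`.  This encodes occurrences of subwords of powers
of `V`. -/
def segment (V : List (Letter n)) (i l : ℕ) : List (Letter n) :=
  (((List.replicate (l + 1) V).flatten).rotate i).take l

/-- The set `LP₁(W)` of linked pairs of occurrences of subwords of `W`,
an occurrence being encoded by its starting position and its length. -/
def LP1 (O W : List (Letter n)) : Set ((ℕ × ℕ) × (ℕ × ℕ)) :=
  {e | e.1.1 < W.length ∧ e.2.1 < W.length ∧ e.1.2 ≤ W.length ∧ e.2.2 ≤ W.length ∧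
    LinkedPair O (segment W e.1.1 e.1.2) (segment W e.2.1 e.2.2)}

/-- The set `LP₂(V,W)` of linked pairs of the pair of cyclic words `(V,W)`:
pairs of occurrences of subwords of powers of `V` resp. `W` which are linked.
(The normalization `len V^{j-1} < len P ≤ len V^j` is implicit in the encoding
of an occurrence by a starting position `< len V` and a length.) -/
def LP2 (O V W : List (Letter n)) : Set ((ℕ × ℕ) × (ℕ × ℕ)) :=
  {e | e.1.1 < V.length ∧ e.2.1 < W.length ∧
    LinkedPair O (segment V e.1.1 e.1.2) (segment W e.2.1 e.2.2)}

end ChasCW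

namespace ChasCW

variable {n : ℕ}

/-- The glued cyclic word `γ(P,Q)` of a linked pair of occurrences
`e = ((i, len P), (j, len Q)) ∈ LP₂(V,W)` (Section 2.3).  In cases (1),(2) it is
`c(V₁W₁)` where `V₁`, `W₁` are the representatives of `V`, `W` cut immediately
before `p₂`, resp. `q₂`; in case (3) (detected by the middle of `Q` being the
inverse of the middle `Y` of `P`) it is `c(V₁W₁)` with `V₁` the subword of `V`
complementary to `Y` and `W₁` the subword of `W` complementary to `Ȳ`. -/
def gammaLP (V W : List (Letter n)) (e : (ℕ × ℕ) × (ℕ × ℕ)) : List (Letter n) :=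
  let i := e.1.1; let lp := e.1.2; let j := e.2.1; let lq := e.2.2
  let P := segment V i lp
  let Q := segment W j lq
  let Y := (P.drop 1).dropLast
  if 3 ≤ lp ∧ (Q.drop 1).dropLast = wordInv Y then
    segment V ((i + 1 + Y.length) % V.length)
      ((V.length - Y.length % V.length) % V.length) ++
    segment W ((j + 1 + Y.length) % W.length)
      ((W.length - Y.length % W.length) % W.length)
  else
    V.rotate ((i + lp - 1) % V.length) ++ W.rotate ((j + lq - 1) % W.length)

/-- The first cyclic word `δ₁(P,Q)` obtained by cutting `W` along the linked
pair of occurrences `e ∈ LP₁(W)`. -/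
def delta1 (W : List (Letter n)) (e : (ℕ × ℕ) × (ℕ × ℕ)) : List (Letter n) :=
  let m := W.length
  let i := e.1.1; let lp := e.1.2; let j := e.2.1; let lq := e.2.2
  let P := segment W i lp
  let Q := segment W j lq
  let Y := (P.drop 1).dropLast
  let c₁ := (i + lp - 1) % m
  let c₂ := (j + lq - 1) % m
  if 3 ≤ lp ∧ (Q.drop 1).dropLast = wordInv Y then
    (W.rotate c₁).take (((j + m - c₁) % m) + 1)
  else
    (W.rotate c₁).take ((c₂ + m - c₁) % m)

/-- The second cyclic word `δ₂(P,Q)` obtained by cutting `W` along the linked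
pair of occurrences `e ∈ LP₁(W)`. -/
def delta2 (W : List (Letter n)) (e : (ℕ × ℕ) × (ℕ × ℕ)) : List (Letter n) :=
  let m := W.length
  let i := e.1.1; let lp := e.1.2; let j := e.2.1; let lq := e.2.2
  let P := segment W i lp
  let Q := segment W j lq
  let Y := (P.drop 1).dropLast
  let c₁ := (i + lp - 1) % m
  let c₂ := (j + lq - 1) % m
  if 3 ≤ lp ∧ (Q.drop 1).dropLast = wordInv Y then
    (W.rotate c₂).take (((i + m - c₂) % m) + 1)
  else
    (W.rotate c₂).take ((c₁ + m - c₂) % m)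

open Classical in
/-- `LP₁(W)` as a finite set. -/
noncomputable def LP1F (O W : List (Letter n)) : Finset ((ℕ × ℕ) × (ℕ × ℕ)) :=
  ((Finset.range W.length ×ˢ Finset.range (W.length + 1)) ×ˢ
   (Finset.range W.length ×ˢ Finset.range (W.length + 1))).filter
    (fun e => LinkedPair O (segment W e.1.1 e.1.2) (segment W e.2.1 e.2.2))

open Classical in
/-- `LP₂(V,W)` as a finite set (subword lengths are `< len V + len W` by
Proposition 2.12). -/
noncomputable def LP2F (O V W : List (Letter n)) : Finset ((ℕ × ℕ) × (ℕ × ℕ)) :=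
  ((Finset.range V.length ×ˢ Finset.range (V.length + W.length)) ×ˢ
   (Finset.range W.length ×ˢ Finset.range (V.length + W.length))).filter
    (fun e => LinkedPair O (segment V e.1.1 e.1.2) (segment W e.2.1 e.2.2))

/-- The combinatorial Turaev cobracket
`δ(W) = ∑_{(P,Q) ∈ LP₁(W)} sign(P,Q) δ₁(P,Q) ⊗ δ₂(P,Q)`, with values in the
tensor square of the vector space with basis the cyclic words, realized as the
free vector space on pairs of cyclic words (`single (c₁, c₂) 1 = c₁ ⊗ c₂`). -/
noncomputable def cobracket (O W : List (Letter n)) :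
    (CWord n × CWord n) →₀ ℚ :=
  ∑ e ∈ LP1F O W,
    (signLP O (segment W e.1.1 e.1.2) (segment W e.2.1 e.2.2)) •
      Finsupp.single (cw (delta1 W e), cw (delta2 W e)) (1 : ℚ)

/-- The combinatorial Goldman bracket
`[V,W] = ∑_{(P,Q) ∈ LP₂(V,W)} sign(P,Q) γ(P,Q)`. -/
noncomputable def bracket (O V W : List (Letter n)) : CWord n →₀ ℚ :=
  ∑ e ∈ LP2F O V W,
    (signLP O (segment V e.1.1 e.1.2) (segment W e.2.1 e.2.2)) •
      Finsupp.single (cw (gammaLP V W e)) (1 : ℚ)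

end ChasCW


namespace ChasCW
variable {n : ℕ}

instance decCE (w O : List (Letter n)) : Decidable (CyclicEmbeds w O) :=
  inferInstanceAs (Decidable (w.Nodup ∧ ∃ i ≤ w.length, ∃ j ≤ O.length,
    (w.rotate i).Sublist (O.rotate j)))

def orientB (O w : List (Letter n)) : ℤ :=
  if CyclicEmbeds w O then 1 else if CyclicEmbeds w O.reverse then -1 else 0

lemma orient_eq' (O w : List (Letter n)) : orient O w = orientB O w := by
  unfold orient orientB
  by_cases h1 : CyclicEmbeds w O <;> by_cases h2 : CyclicEmbeds w O.reverse <;>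
    simp [h1, h2]

def reducedB : List (Letter n) → Bool
  | [] => true
  | [_] => true
  | a :: b :: l => (decide (b ≠ bar a)) && reducedB (b :: l)

lemma reduced_iff (w : List (Letter n)) : Reduced w ↔ reducedB w = true := by
  induction w with
  | nil => simp [Reduced, reducedB, List.Chain']
  | cons a l ih =>
    cases l with
    | nil => simp [Reduced, reducedB, List.Chain']
    | cons b m =>
      unfold Reduced List.Chain'
      rw [List.isChain_cons_cons, show IsChain (fun a b => b ≠ bar a) (b :: m) ↔ _ from ih]
      simp [reducedB]

instance decReduced (w : List (Letter n)) : Decidable (Reduced w) :=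
  decidable_of_iff _ (reduced_iff w).symm

instance decL1 (O : List (Letter n)) (p₁ p₂ q₁ q₂ : Letter n) :
    Decidable (Linked1 O p₁ p₂ q₁ q₂) :=
  decidable_of_iff (Reduced [p₁, p₂] ∧ Reduced [q₁, q₂] ∧
      orientB O [bar p₁, bar q₁, p₂, q₂] ≠ 0) (by rw [Linked1, orient_eq'])

instance decL2 (O : List (Letter n)) (p₁ p₂ q₁ q₂ x₁ x₂ : Letter n)
    (Y : List (Letter n)) : Decidable (Linked2 O p₁ p₂ q₁ q₂ x₁ x₂ Y) :=
  decidable_of_iff (Y ≠ [] ∧ Y.head? = some x₁ ∧ Y.getLast? = some x₂ ∧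
    p₁ ≠ q₁ ∧ p₂ ≠ q₂ ∧
    Reduced (p₁ :: (Y ++ [p₂])) ∧ Reduced (q₁ :: (Y ++ [q₂])) ∧
    orientB O [bar p₁, bar q₁, x₁] = orientB O [p₂, q₂, bar x₂])
    (by rw [Linked2, orient_eq', orient_eq'])

instance decL3 (O : List (Letter n)) (p₁ p₂ q₁ q₂ x₁ x₂ : Letter n)
    (Y : List (Letter n)) : Decidable (Linked3 O p₁ p₂ q₁ q₂ x₁ x₂ Y) :=
  decidable_of_iff (Y ≠ [] ∧ Y.head? = some x₁ ∧ Y.getLast? = some x₂ ∧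
    p₁ ≠ bar q₂ ∧ p₂ ≠ bar q₁ ∧
    Reduced (p₁ :: (Y ++ [p₂])) ∧ Reduced (q₁ :: (wordInv Y ++ [q₂])) ∧
    orientB O [q₂, bar p₁, x₁] = orientB O [bar q₁, p₂, bar x₂])
    (by rw [Linked3, orient_eq', orient_eq'])

/-- Decompose a word of length ≥ 2 as `p₁ :: (Y ++ [p₂])`. -/
def decompW (P : List (Letter n)) : Option (Letter n × List (Letter n) × Letter n) :=
  match P with
  | p₁ :: P' => (P'.getLast?).map (fun p₂ => (p₁, P'.dropLast, p₂))
  | [] => none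

lemma decompW_iff {P : List (Letter n)} {p₁ p₂ : Letter n} {Y : List (Letter n)} :
    decompW P = some (p₁, Y, p₂) ↔ P = p₁ :: (Y ++ [p₂]) := by
  constructor
  · intro h
    match P with
    | [] => simp [decompW] at h
    | p :: P' =>
      simp only [decompW, Option.map_eq_some_iff] at h
      obtain ⟨q, hg, heq⟩ := h
      simp only [Prod.mk.injEq] at heq
      obtain ⟨rfl, rfl, rfl⟩ := heq
      have hne : P' ≠ [] := by rintro rfl; simp at hg
      have h2 := List.dropLast_append_getLast hne
      rw [List.getLast?_eq_getLast hne] at hg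
      simp only [Option.some.injEq] at hg
      rw [hg] at h2
      rw [h2]
  · rintro rfl
    simp [decompW, List.getLast?_concat, List.dropLast_concat]

def LinkedPairAux (O P Q : List (Letter n)) : Prop :=
  match decompW P, decompW Q with
  | some (p₁, Y, p₂), some (q₁, Z, q₂) =>
    (Y = [] ∧ Z = [] ∧ Linked1 O p₁ p₂ q₁ q₂) ∨
    (Z = Y ∧ ∃ x₁ x₂, Linked2 O p₁ p₂ q₁ q₂ x₁ x₂ Y) ∨
    (Z = wordInv Y ∧ ∃ x₁ x₂, Linked3 O p₁ p₂ q₁ q₂ x₁ x₂ Y)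
  | _, _ => False

lemma LPA_some {O P Q : List (Letter n)} {p₁ p₂ q₁ q₂ : Letter n}
    {Y Z : List (Letter n)} (hP : decompW P = some (p₁, Y, p₂))
    (hQ : decompW Q = some (q₁, Z, q₂)) :
    LinkedPairAux O P Q ↔
      ((Y = [] ∧ Z = [] ∧ Linked1 O p₁ p₂ q₁ q₂) ∨
       (Z = Y ∧ ∃ x₁ x₂, Linked2 O p₁ p₂ q₁ q₂ x₁ x₂ Y) ∨
       (Z = wordInv Y ∧ ∃ x₁ x₂, Linked3 O p₁ p₂ q₁ q₂ x₁ x₂ Y)) := by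
  unfold LinkedPairAux; rw [hP, hQ]

lemma LPA_none₁ {O P Q : List (Letter n)} (hP : decompW P = none) :
    ¬ LinkedPairAux O P Q := by
  unfold LinkedPairAux; rw [hP]
  rcases decompW Q with - | e <;> exact not_false

lemma LPA_none₂ {O P Q : List (Letter n)} (hQ : decompW Q = none) :
    ¬ LinkedPairAux O P Q := by
  unfold LinkedPairAux; rw [hQ]
  rcases decompW P with - | ⟨p₁, Y, p₂⟩ <;> exact not_false

instance decLPA (O P Q : List (Letter n)) : Decidable (LinkedPairAux O P Q) :=
  match hP : decompW P, hQ : decompW Q with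
  | some (p₁, Y, p₂), some (q₁, Z, q₂) => decidable_of_iff _ (LPA_some hP hQ).symm
  | none, _ => isFalse (LPA_none₁ hP)
  | some _, none => isFalse (LPA_none₂ hQ)

lemma linkedPair_iff (O P Q : List (Letter n)) :
    LinkedPair O P Q ↔ LinkedPairAux O P Q := by
  constructor
  · rintro (⟨p₁, p₂, q₁, q₂, rfl, rfl, h⟩ |
      ⟨p₁, p₂, q₁, q₂, x₁, x₂, Y, rfl, rfl, h⟩ |
      ⟨p₁, p₂, q₁, q₂, x₁, x₂, Y, rfl, rfl, h⟩)
    · have hP : decompW [p₁, p₂] = some (p₁, ([] : List (Letter n)), p₂) :=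
        decompW_iff.mpr (by simp)
      have hQ : decompW [q₁, q₂] = some (q₁, ([] : List (Letter n)), q₂) :=
        decompW_iff.mpr (by simp)
      exact (LPA_some hP hQ).mpr (Or.inl ⟨rfl, rfl, h⟩)
    · exact (LPA_some (decompW_iff.mpr rfl) (decompW_iff.mpr rfl)).mpr
        (Or.inr (Or.inl ⟨rfl, x₁, x₂, h⟩))
    · exact (LPA_some (decompW_iff.mpr rfl) (decompW_iff.mpr rfl)).mpr
        (Or.inr (Or.inr ⟨rfl, x₁, x₂, h⟩))
  · intro h
    rcases hP : decompW P with - | ⟨p₁, Y, p₂⟩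
    · exact absurd h (LPA_none₁ hP)
    rcases hQ : decompW Q with - | ⟨q₁, Z, q₂⟩
    · exact absurd h (LPA_none₂ hQ)
    have h' := (LPA_some (O := O) hP hQ).mp h
    have hP' := decompW_iff.mp hP
    have hQ' := decompW_iff.mp hQ
    rcases h' with ⟨rfl, rfl, h⟩ | ⟨rfl, x₁, x₂, h⟩ | ⟨rfl, x₁, x₂, h⟩
    · exact Or.inl ⟨p₁, p₂, q₁, q₂, by simpa using hP', by simpa using hQ', h⟩
    · exact Or.inr (Or.inl ⟨p₁, p₂, q₁, q₂, x₁, x₂, _, hP', hQ', h⟩)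
    · exact Or.inr (Or.inr ⟨p₁, p₂, q₁, q₂, x₁, x₂, _, hP', hQ', h⟩)

end ChasCW


namespace ChasCW
abbrev aL : Fin 4 → Letter 4 := fun i => (i, true)
abbrev OL : List (Letter 4) := [aL 0, aL 1, bar (aL 0), bar (aL 1), aL 2, aL 3, bar (aL 2), bar (aL 3)]
abbrev VL : List (Letter 4) := [aL 0, aL 1, aL 1, aL 2]
abbrev WL : List (Letter 4) := [bar (aL 1), bar (aL 1)]

set_option maxRecDepth 10000 in
example : CyclicEmbeds [aL 0, aL 1] OL := by decide
set_option maxRecDepth 10000 in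
example : orientB OL [bar (aL 1), bar (aL 0), aL 1] = -1 := by decide
set_option maxRecDepth 40000 in
lemma mainLP : ∀ e ∈ ((Finset.range 4 ×ˢ Finset.range 6) ×ˢ (Finset.range 2 ×ˢ Finset.range 6)),
    (LinkedPairAux OL (segment VL e.1.1 e.1.2) (segment WL e.2.1 e.2.2) ↔
      (e = ((0,4),(0,4)) ∨ e = ((0,4),(1,4)))) := by decide
end ChasCW

namespace ChasCW

/-- Examples 2.14 and 2.16: with surface symbol
`O = c(a₁a₂ā₁ā₂a₃a₄ā₃ā₄)`, the bracket of `c(a₁a₂a₂a₃)` and `c(ā₂ā₂)` equals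
`-2·c(a₃a₁)`; moreover `LP₂(c(a₁a₂a₂a₃), c(ā₂ā₂))` consists of exactly two
linked pairs, both of type (3), namely two occurrences of the pair
`(a₁a₂a₂a₃, ā₂ā₂ā₂ā₂)` (the word `Q = ā₂ā₂ā₂ā₂` is a subword of `c(ā₂ā₂)²`,
occurring at starting positions `0` and `1`). -/
theorem bracket_example :
    let a : Fin 4 → Letter 4 := fun i => (i, true)
    let O : List (Letter 4) :=
      [a 0, a 1, bar (a 0), bar (a 1), a 2, a 3, bar (a 2), bar (a 3)]
    let V : List (Letter 4) := [a 0, a 1, a 1, a 2]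
    let W : List (Letter 4) := [bar (a 1), bar (a 1)]
    bracket O V W = (-2 : ℚ) • Finsupp.single (cw [a 2, a 0]) 1 ∧
    LP2F O V W = {((0, 4), (0, 4)), ((0, 4), (1, 4))} ∧
    segment V 0 4 = [a 0, a 1, a 1, a 2] ∧
    segment W 0 4 = [bar (a 1), bar (a 1), bar (a 1), bar (a 1)] ∧
    segment W 1 4 = [bar (a 1), bar (a 1), bar (a 1), bar (a 1)] ∧
    Linked3 O (a 0) (a 2) (bar (a 1)) (bar (a 1)) (a 1) (a 1) [a 1, a 1] := by
  intro a O V W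
  show bracket OL VL WL = (-2 : ℚ) • Finsupp.single (cw [aL 2, aL 0]) 1 ∧
    LP2F OL VL WL = {((0, 4), (0, 4)), ((0, 4), (1, 4))} ∧
    segment VL 0 4 = [aL 0, aL 1, aL 1, aL 2] ∧
    segment WL 0 4 = [bar (aL 1), bar (aL 1), bar (aL 1), bar (aL 1)] ∧
    segment WL 1 4 = [bar (aL 1), bar (aL 1), bar (aL 1), bar (aL 1)] ∧
    Linked3 OL (aL 0) (aL 2) (bar (aL 1)) (bar (aL 1)) (aL 1) (aL 1) [aL 1, aL 1]
  have h2 : LP2F OL VL WL = {((0, 4), (0, 4)), ((0, 4), (1, 4))} := by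
    ext e
    simp only [LP2F, Finset.mem_filter, Finset.mem_insert, Finset.mem_singleton]
    constructor
    · rintro ⟨hmem, hlp⟩
      have hm : e ∈ ((Finset.range 4 ×ˢ Finset.range 6) ×ˢ
          (Finset.range 2 ×ˢ Finset.range 6)) := hmem
      exact (mainLP e hm).mp ((linkedPair_iff _ _ _).mp hlp)
    · rintro (rfl | rfl)
      · exact ⟨by decide, (linkedPair_iff _ _ _).mpr (by decide)⟩
      · exact ⟨by decide, (linkedPair_iff _ _ _).mpr (by decide)⟩
  have hs1 : signLP OL (segment VL 0 4) (segment WL 0 4) = -1 := by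
    have h : signLP OL (segment VL 0 4) (segment WL 0 4) =
        orient OL [bar (aL 1), bar (aL 0), aL 1] := rfl
    rw [h, orient_eq']; decide
  have hs2 : signLP OL (segment VL 0 4) (segment WL 1 4) = -1 := by
    have h : signLP OL (segment VL 0 4) (segment WL 1 4) =
        orient OL [bar (aL 1), bar (aL 0), aL 1] := rfl
    rw [h, orient_eq']; decide
  have hg1 : gammaLP VL WL ((0, 4), (0, 4)) = [aL 2, aL 0] := by decide
  have hg2 : gammaLP VL WL ((0, 4), (1, 4)) = [aL 2, aL 0] := by decide
  refine ⟨?_, h2, rfl, rfl, rfl, by decide⟩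
  rw [bracket, h2, Finset.sum_insert (by decide), Finset.sum_singleton, hs1, hs2,
    hg1, hg2]
  module

end ChasCW
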